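/- Multi-dimensional chaos criterion: let (T,X) be a topological flow on a Polish space X with T an abelian topological group acting jointly continuously. Assume (a) (T,X) is topologically transitive and there is a transitive point x ∈ X whose orbit T•x has empty interior in X, and (b) there exists a periodic point p ∈ X (its stabilizer {t : t•p = p} is syndetic in T). Then for every increasing sequence F₁ ⊆ F₂ ⊆ F₃ ⊆ ⋯ of compact subsets of T there exists an infinite set Θ ⊆ X such that for every k ≥ 2 and all pairwise distinct points x₁,…,x_k ∈ Θ there are sequences (t_n) in T and (s_n) in T with s_n ∉ F_n for all n, such that t_n•x_i → p for every i = 1,…,k, and s_n•x_i → x_i for every i = 1,…,k, as n → ∞. -/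

import Mathlib

open Filter Topology Set

/-- A subset `B` of a topological group `T` is *syndetic* if there is a compact set
`K ⊆ T` such that `K·t` meets `B` for every `t ∈ T`. -/
def Syndetic {T : Type*} [Monoid T] [TopologicalSpace T] (B : Set T) : Prop :=
  ∃ K : Set T, IsCompact K ∧ ∀ t : T, ∃ k ∈ K, k * t ∈ B

/-- Multi-dimensional chaos criterion: let `(T,X)` be a topological flow on a Polish space
`X` with `T` an abelian topological group. If `(T,X)` is topologically transitive with a
transitive point whose orbit has empty interior, and there is a periodic point `p`, then
for every increasing sequence of compact sets `F n ⊆ T` there is an infinite set `Θ ⊆ X`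
such that any `k ≥ 2` distinct points of `Θ` are simultaneously proximal to `p` along a
sequence `(t n)` and simultaneously recurrent along a sequence `(s n)` with `s n ∉ F n`. -/
theorem multidimensional_chaos_criterion
    {T X : Type*} [CommGroup T] [TopologicalSpace T] [IsTopologicalGroup T]
    [TopologicalSpace X] [PolishSpace X] [MulAction T X] [ContinuousSMul T X]
    (htrans : ∀ U V : Set X, IsOpen U → U.Nonempty → IsOpen V → V.Nonempty →
      ∃ t : T, ∃ x ∈ U, t • x ∈ V)
    (x : X) (hx : Dense (MulAction.orbit T x)) (hxint : interior (MulAction.orbit T x) = ∅)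
    (p : X) (hp : Syndetic {t : T | t • p = p}) :
    ∀ F : ℕ → Set T, (∀ n, IsCompact (F n)) → Monotone F →
      ∃ Θ : Set X, Θ.Infinite ∧
        ∀ k : ℕ, 2 ≤ k → ∀ z : Fin k → X, (∀ i, z i ∈ Θ) → Function.Injective z →
          ∃ t s : ℕ → T, (∀ n, s n ∉ F n) ∧
            (∀ i, Tendsto (fun n => t n • z i) atTop (𝓝 p)) ∧
            (∀ i, Tendsto (fun n => s n • z i) atTop (𝓝 (z i))) := by
  letI := TopologicalSpace.upgradeIsCompletelyMetrizable X
  obtain ⟨K, hKc, hKs⟩ := hp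
  intro F hFc _hFmono
  -- continuity of the orbit map
  have hcont : Continuous fun t : T => t • x := continuous_id.smul continuous_const
  -- commutation of the action
  have hcomm : ∀ (a b : T) (y : X), a • (b • y) = b • (a • y) := by
    intro a b y
    rw [smul_smul, mul_comm, ← smul_smul]
  -- Step 1: recurrence of x away from any compact set of times
  have hrec : ∀ G : Set T, IsCompact G → ∀ ε : ℝ, 0 < ε →
      ∃ s : T, s ∉ G ∧ dist (s • x) x < ε := by
    intro G hG ε hε
    by_contra hcon
    push_neg at hcon
    set C : Set X := (fun t : T => t • x) '' G with hCdef
    have hCc : IsCompact C := hG.image hcont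
    have h2 : Metric.ball x ε ∩ MulAction.orbit T x ⊆ C := by
      rintro w ⟨hw1, hw2⟩
      obtain ⟨t, rfl⟩ := MulAction.mem_orbit_iff.mp hw2
      by_contra hwC
      have htG : t ∉ G := fun h => hwC ⟨t, h, rfl⟩
      exact absurd hw1 (not_lt.2 (hcon t htG))
    have hball : Metric.ball x ε ⊆ C := by
      intro y hy
      have h1 : y ∈ closure (Metric.ball x ε ∩ MulAction.orbit T x) := by
        rw [mem_closure_iff]
        intro O hO hyO
        obtain ⟨w, hw1, hw2⟩ := hx.exists_mem_open (hO.inter Metric.isOpen_ball)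
          ⟨y, hyO, hy⟩
        exact ⟨w, hw2.1, hw2.2, hw1⟩
      have h3 := closure_mono h2 h1
      rwa [hCc.isClosed.closure_eq] at h3
    have hxin : x ∈ interior (MulAction.orbit T x) := by
      refine mem_interior.2 ⟨Metric.ball x ε, ?_, Metric.isOpen_ball, Metric.mem_ball_self hε⟩
      refine hball.trans ?_
      rintro w ⟨t, _, rfl⟩
      exact ⟨t, rfl⟩
    rw [hxint] at hxin
    exact hxin
  -- The candidate set
  set S : Set T := {t : T | t • p = p} with hSdef
  refine ⟨(fun t : T => t • x) '' S, ?_, ?_⟩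
  · -- infinitude
    intro hfin
    set C : Set X := (fun q : T × X => q.1⁻¹ • q.2) '' (K ×ˢ ((fun t : T => t • x) '' S))
      with hCdef
    have hCc : IsCompact C :=
      (hKc.prod hfin.isCompact).image ((continuous_fst.inv).smul continuous_snd)
    have horbC : MulAction.orbit T x ⊆ C := by
      rintro w hw
      obtain ⟨t, rfl⟩ := MulAction.mem_orbit_iff.mp hw
      obtain ⟨kk, hk, hks⟩ := hKs t
      refine ⟨(kk, (kk * t) • x), ⟨hk, Set.mem_image_of_mem _ hks⟩, ?_⟩
      simp only [smul_smul]
      rw [inv_mul_cancel_left]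
    have hCorb : C ⊆ MulAction.orbit T x := by
      rintro w ⟨⟨kk, y⟩, ⟨_, ⟨s, _, rfl⟩⟩, rfl⟩
      exact ⟨kk⁻¹ * s, by simp [smul_smul]⟩
    have huniv : (univ : Set X) ⊆ MulAction.orbit T x := by
      have h1 : closure (MulAction.orbit T x) ⊆ C :=
        closure_minimal horbC hCc.isClosed
      rw [hx.closure_eq] at h1
      exact h1.trans hCorb
    have hxin : x ∈ interior (MulAction.orbit T x) := by
      rw [Set.eq_univ_of_univ_subset huniv]
      simp
    rw [hxint] at hxin
    exact hxin
  · -- the chaos property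
    intro k _hk z hz _hinj
    choose e he1 he2 using fun i => hz i
    have he2' : ∀ i, e i • x = z i := he2
    -- construct t
    have ht : ∀ n : ℕ, ∃ t : T, ∀ i, dist (t • z i) p < 1 / ((n : ℝ) + 1) := by
      intro n
      set V : Set X := ⋂ i, (fun y => e i • y) ⁻¹' Metric.ball p (1 / ((n : ℝ) + 1)) with hVdef
      have hVo : IsOpen V :=
        isOpen_iInter_of_finite fun i =>
          Metric.isOpen_ball.preimage (continuous_const_smul _)
      have hpV : p ∈ V := by
        refine Set.mem_iInter.2 fun i => ?_
        have hip : e i • p = p := he1 i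
        simp only [Set.mem_preimage, hip]
        exact Metric.mem_ball_self (by positivity)
      obtain ⟨w, hw1, hw2⟩ := hx.exists_mem_open hVo ⟨p, hpV⟩
      obtain ⟨t, rfl⟩ := MulAction.mem_orbit_iff.mp hw1
      refine ⟨t, fun i => ?_⟩
      have h4 := Set.mem_iInter.1 hw2 i
      have hz' : t • z i = e i • (t • x) := by rw [← he2' i, hcomm]
      rw [hz']
      exact h4
    choose t htt using ht
    -- construct s
    have hs : ∀ n : ℕ, ∃ s : T, s ∉ F n ∧ ∀ i, dist (s • z i) (z i) < 1 / ((n : ℝ) + 1) := by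
      intro n
      set W : Set X := ⋂ i, (fun y => e i • y) ⁻¹' Metric.ball (z i) (1 / ((n : ℝ) + 1)) with hWdef
      have hWo : IsOpen W :=
        isOpen_iInter_of_finite fun i =>
          Metric.isOpen_ball.preimage (continuous_const_smul _)
      have hxW : x ∈ W := by
        refine Set.mem_iInter.2 fun i => ?_
        simp only [Set.mem_preimage, he2 i]
        exact Metric.mem_ball_self (by positivity)
      obtain ⟨η, hη, hηW⟩ := Metric.isOpen_iff.1 hWo x hxW
      obtain ⟨s, hsF, hsd⟩ := hrec (F n) (hFc n) η hη
      refine ⟨s, hsF, fun i => ?_⟩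
      have : s • x ∈ W := hηW (by simpa [Metric.mem_ball, dist_comm] using hsd)
      have h3 := Set.mem_iInter.1 this i
      have hz' : s • z i = e i • (s • x) := by rw [← he2' i, hcomm]
      rw [hz']
      exact h3
    choose s hs1 hs2 using hs
    have hlim : Tendsto (fun n : ℕ => 1 / ((n : ℝ) + 1)) atTop (𝓝 0) :=
      tendsto_one_div_add_atTop_nhds_zero_nat
    refine ⟨t, s, hs1, fun i => ?_, fun i => ?_⟩
    · rw [tendsto_iff_dist_tendsto_zero]
      exact squeeze_zero (fun n => dist_nonneg) (fun n => (htt n i).le) hlim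
    · rw [tendsto_iff_dist_tendsto_zero]
      exact squeeze_zero (fun n => dist_nonneg) (fun n => (hs2 n i).le) hlim
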